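/- Let m:[0,1]→(0,∞) be continuous, fix x ∈ ℝ, and set ρ_{ni}=1−m(i/n)/log n, u_n(x)=b_n+x/b_n. There is a constant C>0 such that for all sufficiently large n, all 1≤i≤n and all z ∈ ℝ, | Φ( (u_n(x)−ρ_{ni}u_n(z)) / √(1−ρ_{ni}²) ) − Φ( √(m(i/n)) + (x−z)/(2√(m(i/n))) ) | ≤ C(1+|z|)·(log log n)/(log n). -/

import Mathlib

open MeasureTheory Filter Real

/-- The standard Gaussian cumulative distribution function `Φ`. -/
noncomputable def stdCDF (x : ℝ) : ℝ :=
  ∫ t in Set.Iic x, (Real.sqrt (2 * Real.pi))⁻¹ * Real.exp (-(t ^ 2) / 2)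

/-- The joint CDF of a bivariate standard Gaussian vector with correlation `ρ`. -/
noncomputable def bvnCDF (ρ x y : ℝ) : ℝ :=
  ∫ s in Set.Iic x, ∫ t in Set.Iic y,
    (2 * Real.pi * Real.sqrt (1 - ρ ^ 2))⁻¹ *
      Real.exp (-(s ^ 2 - 2 * ρ * s * t + t ^ 2) / (2 * (1 - ρ ^ 2)))


noncomputable def phi (t : ℝ) : ℝ := (Real.sqrt (2 * Real.pi))⁻¹ * Real.exp (-(t ^ 2) / 2)

lemma phi_pos (t : ℝ) : 0 < phi t := by
  unfold phi; positivity

lemma phi_integrable : Integrable phi := by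
  have h : Integrable (fun t : ℝ => Real.exp (-(1/2) * t ^ 2)) := integrable_exp_neg_mul_sq (by norm_num)
  have := h.const_mul (Real.sqrt (2 * Real.pi))⁻¹
  convert this using 2 with t
  unfold phi; ring_nf

lemma phi_total : ∫ t, phi t = 1 := by
  unfold phi
  rw [MeasureTheory.integral_const_mul]
  have h : ∫ t : ℝ, Real.exp (-(1/2) * t ^ 2) = Real.sqrt (π / (1/2)) := integral_gaussian (1/2)
  have h2 : (fun t : ℝ => Real.exp (-(t^2) / 2)) = fun t : ℝ => Real.exp (-(1/2) * t ^ 2) := by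
    funext t; ring_nf
  rw [h2, h]
  have : π / (1/2 : ℝ) = 2 * π := by ring
  rw [this]
  rw [inv_mul_cancel₀ (by positivity)]

lemma stdCDF_eq (x : ℝ) : stdCDF x = ∫ t in Set.Iic x, phi t := rfl

lemma tail_eq (a : ℝ) : 1 - stdCDF a = ∫ t in Set.Ioi a, phi t := by
  have h := intervalIntegral.integral_Iic_add_Ioi (b := a) (f := phi) (μ := volume)
    phi_integrable.integrableOn phi_integrable.integrableOn
  rw [phi_total] at h
  rw [stdCDF_eq]; linarith

lemma stdCDF_sub (a c : ℝ) (h : a ≤ c) :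
    stdCDF c - stdCDF a = ∫ t in Set.Ioc a c, phi t := by
  rw [stdCDF_eq, stdCDF_eq,
    intervalIntegral.integral_Iic_sub_Iic phi_integrable.integrableOn phi_integrable.integrableOn,
    intervalIntegral.integral_of_le h]

lemma stdCDF_mono : Monotone stdCDF := by
  intro a c h
  have := stdCDF_sub a c h
  have hpos : 0 ≤ ∫ t in Set.Ioc a c, phi t :=
    MeasureTheory.setIntegral_nonneg measurableSet_Ioc (fun t _ => (phi_pos t).le)
  linarith

-- lower bound for integral over Ioc by constant
lemma integral_Ioc_ge (a c v : ℝ) (h : a ≤ c) (hv : ∀ t ∈ Set.Ioc a c, v ≤ phi t) :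
    (c - a) * v ≤ ∫ t in Set.Ioc a c, phi t := by
  have := MeasureTheory.setIntegral_mono_on (f := fun _ : ℝ => v) (g := phi)
    (integrableOn_const measure_Ioc_lt_top.ne) phi_integrable.integrableOn
    measurableSet_Ioc hv
  rwa [MeasureTheory.setIntegral_const, Real.volume_real_Ioc_of_le h,
    smul_eq_mul] at this

lemma integral_Ioc_le (a c v : ℝ) (h : a ≤ c) (hv : ∀ t ∈ Set.Ioc a c, phi t ≤ v) :
    (∫ t in Set.Ioc a c, phi t) ≤ (c - a) * v := by
  have := MeasureTheory.setIntegral_mono_on (g := fun _ : ℝ => v) (f := phi)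
    phi_integrable.integrableOn (integrableOn_const measure_Ioc_lt_top.ne)
    measurableSet_Ioc hv
  rwa [MeasureTheory.setIntegral_const, Real.volume_real_Ioc_of_le h,
    smul_eq_mul] at this

lemma phi_le_one (t : ℝ) : phi t ≤ 1 := by
  unfold phi
  have h1 : Real.exp (-(t ^ 2) / 2) ≤ 1 := by
    rw [Real.exp_le_one_iff]; nlinarith [sq_nonneg t]
  have h2 : (1:ℝ) ≤ Real.sqrt (2 * π) := by
    rw [show (1:ℝ) = Real.sqrt 1 by simp]
    apply Real.sqrt_le_sqrt; nlinarith [Real.pi_gt_three]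
  calc (Real.sqrt (2 * π))⁻¹ * Real.exp (-(t ^ 2) / 2) ≤ 1 * 1 := by
        apply mul_le_mul _ h1 (by positivity) zero_le_one
        rw [inv_le_one_iff₀]; right; exact h2
    _ = 1 := by ring

lemma stdCDF_lipschitz (a c : ℝ) : |stdCDF a - stdCDF c| ≤ |a - c| := by
  wlog h : c ≤ a generalizing a c
  · rw [abs_sub_comm, abs_sub_comm a c]; exact this _ _ (le_of_not_ge h)
  rw [abs_of_nonneg (by linarith [stdCDF_mono h] : (0:ℝ) ≤ stdCDF a - stdCDF c),
    abs_of_nonneg (by linarith : (0:ℝ) ≤ a - c)]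
  rw [stdCDF_sub c a h]
  calc (∫ t in Set.Ioc c a, phi t) ≤ (a - c) * 1 := integral_Ioc_le c a 1 h (fun t _ => phi_le_one t)
    _ = a - c := by ring

lemma hasDerivAt_neg_phi (t : ℝ) : HasDerivAt (fun u => -phi u) (t * phi t) t := by
  have h1 : HasDerivAt (fun u : ℝ => -(u ^ 2) / 2) (-t) t := by
    have := ((hasDerivAt_pow 2 t).neg).div_const 2
    simpa using this.congr_deriv (by ring)
  have h2 : HasDerivAt (fun u : ℝ => Real.exp (-(u ^ 2) / 2)) (Real.exp (-(t^2)/2) * (-t)) t :=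
    (Real.hasDerivAt_exp _).comp t h1
  have h3 : HasDerivAt (fun u => -((Real.sqrt (2 * Real.pi))⁻¹ * Real.exp (-(u ^ 2) / 2)))
      (-((Real.sqrt (2 * Real.pi))⁻¹ * (Real.exp (-(t^2)/2) * (-t)))) t :=
    (h2.const_mul (Real.sqrt (2 * Real.pi))⁻¹).neg
  unfold phi
  convert h3 using 1
  ring

lemma neg_phi_tendsto : Tendsto (fun u => -phi u) atTop (nhds 0) := by
  have h : Tendsto (fun u : ℝ => Real.exp (-(u^2)/2)) atTop (nhds 0) := by
    have h2 : Tendsto (fun u : ℝ => u ^ 2 / 2) atTop atTop :=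
      (tendsto_pow_atTop (by norm_num)).atTop_div_const (by norm_num)
    have := Real.tendsto_exp_neg_atTop_nhds_zero.comp h2
    convert this using 2 with u
    simp [Function.comp]; ring_nf
  have := (h.const_mul (Real.sqrt (2 * Real.pi))⁻¹).neg
  simpa [phi] using this

lemma integrableOn_t_phi (a : ℝ) (ha : 0 < a) : IntegrableOn (fun t => t * phi t) (Set.Ioi a) := by
  apply MeasureTheory.integrableOn_Ioi_deriv_of_nonneg' (g := fun u => -phi u)
  · intro t _; exact hasDerivAt_neg_phi t
  · intro t ht
    exact mul_nonneg (le_of_lt (lt_trans ha ht)) (phi_pos t).le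
  · exact neg_phi_tendsto

lemma integral_t_phi (a : ℝ) (ha : 0 < a) : ∫ t in Set.Ioi a, t * phi t = phi a := by
  have := MeasureTheory.integral_Ioi_of_hasDerivAt_of_tendsto' (f := fun u => -phi u)
    (f' := fun t => t * phi t) (fun t _ => hasDerivAt_neg_phi t) (integrableOn_t_phi a ha)
    neg_phi_tendsto
  simpa using this

lemma sqrt2pi_ge : (2:ℝ) ≤ Real.sqrt (2 * π) := by
  nlinarith [Real.sq_sqrt (by positivity : (0:ℝ) ≤ 2*π), Real.sqrt_nonneg (2*π), Real.pi_gt_three]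

lemma sqrt2pi_le : Real.sqrt (2 * π) ≤ 2.51 := by
  nlinarith [Real.sq_sqrt (by positivity : (0:ℝ) ≤ 2*π), Real.sqrt_nonneg (2*π), Real.pi_lt_d2]

lemma tail_upper (a : ℝ) (ha : 0 < a) : 1 - stdCDF a ≤ Real.exp (-(a^2)/2) / (2 * a) := by
  rw [tail_eq]
  have hint : IntegrableOn (fun t => a⁻¹ * (t * phi t)) (Set.Ioi a) :=
    (integrableOn_t_phi a ha).const_mul a⁻¹
  have h1 : (∫ t in Set.Ioi a, phi t) ≤ ∫ t in Set.Ioi a, a⁻¹ * (t * phi t) := by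
    apply MeasureTheory.setIntegral_mono_on phi_integrable.integrableOn hint measurableSet_Ioi
    intro t ht
    have h2 : a ≤ t := le_of_lt ht
    have := phi_pos t
    rw [← sub_nonneg]
    have h4 : a⁻¹ * (t * phi t) - phi t = (t - a) * (phi t) * a⁻¹ := by field_simp
    rw [h4]
    exact mul_nonneg (mul_nonneg (by linarith) (phi_pos t).le) (by positivity)
  have h2 : (∫ t in Set.Ioi a, a⁻¹ * (t * phi t)) = phi a / a := by
    rw [MeasureTheory.integral_const_mul, integral_t_phi a ha]
    field_simp
  rw [h2] at h1
  refine h1.trans ?_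
  unfold phi
  rw [div_le_div_iff₀ ha (by positivity)]
  have hinv : (Real.sqrt (2 * π))⁻¹ ≤ 2⁻¹ := by
    apply inv_anti₀ (by norm_num) sqrt2pi_ge
  nlinarith [Real.exp_pos (-(a^2)/2), mul_le_mul_of_nonneg_right hinv (Real.exp_pos (-(a^2)/2)).le, ha]

lemma tail_lower (a : ℝ) (ha : 1 ≤ a) : Real.exp (-(a^2)/2) / (19 * a) ≤ 1 - stdCDF a := by
  have ha0 : 0 < a := lt_of_lt_of_le one_pos ha
  rw [tail_eq]
  have hsub : (∫ t in Set.Ioc a (a + 1/a), phi t) ≤ ∫ t in Set.Ioi a, phi t := by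
    apply MeasureTheory.setIntegral_mono_set phi_integrable.integrableOn
    · exact Filter.Eventually.of_forall (fun t => (phi_pos t).le)
    · exact HasSubset.Subset.eventuallyLE (fun t ht => ht.1)
  refine le_trans ?_ hsub
  have hle : a ≤ a + 1/a := le_add_of_nonneg_right (by positivity)
  have hmin : ∀ t ∈ Set.Ioc a (a + 1/a), phi (a + 1/a) ≤ phi t := by
    intro t ht
    have h1 : 0 < t := lt_trans ha0 ht.1
    have h2 : t ≤ a + 1/a := ht.2
    have hexp : Real.exp (-((a + 1/a)^2)/2) ≤ Real.exp (-(t^2)/2) := by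
      apply Real.exp_le_exp.2; nlinarith
    unfold phi
    have hnn : (0:ℝ) ≤ (Real.sqrt (2 * π))⁻¹ := by positivity
    exact mul_le_mul_of_nonneg_left hexp hnn
  have hIoc := integral_Ioc_ge a (a + 1/a) (phi (a + 1/a)) hle hmin
  refine le_trans ?_ hIoc
  have heq : a + 1/a - a = 1/a := by ring
  rw [heq]
  unfold phi
  have hexp : Real.exp (-(a^2)/2) * Real.exp (-(3:ℝ)/2) ≤ Real.exp (-((a + 1/a)^2)/2) := by
    rw [← Real.exp_add]
    apply Real.exp_le_exp.2
    have h1 : 1/a ≤ 1 := by rw [div_le_one ha0]; exact ha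
    have h2 : (a + 1/a)^2 = a^2 + 2 + (1/a)^2 := by field_simp; ring
    nlinarith
  have hexp32 : Real.exp ((3:ℝ)/2) ≤ 7.4 := by
    calc Real.exp ((3:ℝ)/2) ≤ Real.exp 2 := Real.exp_le_exp.2 (by norm_num)
      _ = Real.exp 1 * Real.exp 1 := by rw [← Real.exp_add]; norm_num
      _ ≤ 2.7182818286 * 2.7182818286 := by
          have := Real.exp_one_lt_d9
          nlinarith [Real.exp_pos 1]
      _ ≤ 7.4 := by norm_num
  have epos := Real.exp_pos (-(a^2)/2)
  have e5 : (7.4:ℝ)⁻¹ ≤ Real.exp (-(3:ℝ)/2) := by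
    rw [show (-(3:ℝ)/2) = -(3/2) by ring, Real.exp_neg]
    exact inv_anti₀ (Real.exp_pos _) hexp32
  have e3 : Real.exp (-(a^2)/2) * (7.4:ℝ)⁻¹ ≤ Real.exp (-((a + 1/a)^2)/2) :=
    le_trans (mul_le_mul_of_nonneg_left e5 epos.le) hexp
  have e4 : (2.51:ℝ)⁻¹ ≤ (Real.sqrt (2 * π))⁻¹ := inv_anti₀ (by positivity) sqrt2pi_le
  have h6 : (2.51:ℝ)⁻¹ * (Real.exp (-(a^2)/2) * (7.4:ℝ)⁻¹) ≤
      (Real.sqrt (2 * π))⁻¹ * Real.exp (-((a + 1/a)^2)/2) :=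
    mul_le_mul e4 e3 (by positivity) (by positivity)
  have key : Real.exp (-(a^2)/2) / 19 ≤ (Real.sqrt (2 * π))⁻¹ * Real.exp (-((a + 1/a)^2)/2) := by
    refine le_trans ?_ h6; nlinarith
  calc Real.exp (-(a^2)/2) / (19 * a) = (1/a) * (Real.exp (-(a^2)/2) / 19) := by field_simp
    _ ≤ (1/a) * ((Real.sqrt (2 * π))⁻¹ * Real.exp (-((a + 1/a)^2)/2)) := by
        apply mul_le_mul_of_nonneg_left key (by positivity)

lemma log_facts {L : ℝ} (hL : 1000 ≤ L) :
    1 ≤ Real.log L ∧ Real.log L ≤ L / 15 := by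
  have hL0 : (0:ℝ) < L := by linarith
  have hs0 : (0:ℝ) < Real.sqrt L := Real.sqrt_pos.2 hL0
  have hsq : Real.sqrt L ^ 2 = L := Real.sq_sqrt hL0.le
  have hs31 : (31:ℝ) ≤ Real.sqrt L := by nlinarith
  have h1 : Real.log (Real.sqrt L) ≤ Real.sqrt L - 1 := Real.log_le_sub_one_of_pos hs0
  have h2 : Real.log (Real.sqrt L) = Real.log L / 2 := Real.log_sqrt hL0.le
  constructor
  · rw [Real.le_log_iff_exp_le hL0]
    have := Real.exp_one_lt_d9
    linarith
  · have h3 : Real.log L ≤ 2 * Real.sqrt L := by rw [h2] at h1; linarith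
    nlinarith

lemma bn_bounds {bn L : ℝ} (hbpos : 0 < bn) (hL : 1000 ≤ L)
    (htail : 1 - stdCDF bn = Real.exp (-L)) :
    2 * L - 4 * Real.log L ≤ bn^2 ∧ bn^2 ≤ 2 * L := by
  have hL0 : (0:ℝ) < L := by linarith
  obtain ⟨hlog1, hlog15⟩ := log_facts hL
  constructor
  · -- lower bound
    set a₀ := Real.sqrt (2*L - 4 * Real.log L) with ha₀def
    have harg : (0:ℝ) < 2*L - 4 * Real.log L := by linarith
    have ha₀sq : a₀^2 = 2*L - 4*Real.log L := Real.sq_sqrt harg.le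
    have ha₀0 : 0 < a₀ := Real.sqrt_pos.2 harg
    have ha₀1 : 1 ≤ a₀ := by nlinarith
    have ht := tail_lower a₀ ha₀1
    have hexp2 : Real.exp (-(a₀^2)/2) = Real.exp (-L) * L^2 := by
      rw [ha₀sq, show -(2*L - 4*Real.log L)/2 = -L + 2 * Real.log L by ring, Real.exp_add,
        two_mul, Real.exp_add, Real.exp_log hL0]
      ring
    have h19 : 19 * a₀ < L^2 := by nlinarith
    have hgt : Real.exp (-L) < Real.exp (-(a₀^2)/2) / (19 * a₀) := by
      rw [hexp2, lt_div_iff₀ (by positivity)]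
      have := Real.exp_pos (-L)
      nlinarith
    have hlt : 1 - stdCDF bn < 1 - stdCDF a₀ := by
      rw [htail]; linarith
    have : a₀ < bn := by
      by_contra h
      push_neg at h
      have := stdCDF_mono h
      linarith
    nlinarith
  · -- upper bound
    set a₁ := Real.sqrt (2*L) with ha₁def
    have ha₁sq : a₁^2 = 2*L := Real.sq_sqrt (by linarith)
    have ha₁0 : 0 < a₁ := Real.sqrt_pos.2 (by linarith)
    have ha₁1 : 1 ≤ a₁ := by nlinarith
    have ht := tail_upper a₁ ha₁0
    have hlt : 1 - stdCDF a₁ < 1 - stdCDF bn := by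
      rw [htail]
      have h2 : Real.exp (-(a₁^2)/2) = Real.exp (-L) := by
        rw [ha₁sq]; ring_nf
      calc 1 - stdCDF a₁ ≤ Real.exp (-(a₁^2)/2) / (2*a₁) := ht
        _ = Real.exp (-L) / (2*a₁) := by rw [h2]
        _ < Real.exp (-L) := div_lt_self (Real.exp_pos _) (by linarith)
    have : bn < a₁ := by
      by_contra h
      push_neg at h
      have := stdCDF_mono h
      linarith
    nlinarith

lemma le_of_sq_le_sq' {a c : ℝ} (ha : 0 ≤ a) (hc : 0 ≤ c) (h : a^2 ≤ c^2) : a ≤ c := by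
  nlinarith [sq_nonneg (a - c), sq_nonneg (a + c)]

lemma helperPle {bn q L : ℝ} (hL0 : 0 < L) (hb2 : bn^2 ≤ 2*L) (hq2L : q^2 ≤ L) :
    bn^2 * q^2 * (2*L - q^2) ≤ 4*q^2*L^2 := by
  nlinarith [mul_le_mul_of_nonneg_right hb2
      (mul_nonneg (sq_nonneg q) (by linarith : (0:ℝ) ≤ 2*L - q^2)),
    mul_nonneg (mul_nonneg hL0.le (sq_nonneg q)) (sq_nonneg q)]

lemma helperE2 {L M ℓ : ℝ} (hL0 : 0 < L) (hM0 : 0 < M) (hℓ : 0 < ℓ) :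
    4*(1 - (2*ℓ/L + M/(2*L)))*L^2 ≤ (2*L - 4*ℓ)*(2*L - M) := by
  have h : (2*ℓ/L + M/(2*L))*L^2 = 2*ℓ*L + M*L/2 := by field_simp
  nlinarith [mul_nonneg hℓ.le hM0.le]

set_option maxHeartbeats 1600000 in
lemma main_est (x z q bn L M δ : ℝ)
    (hδ0 : 0 < δ) (hq0 : 0 < q) (hqδ : δ ≤ q^2) (hqM : q^2 ≤ M)
    (hL : 1000 ≤ L) (hLM : 2*M ≤ L) (hM0 : 0 < M)
    (hb1 : 2*L - 4*Real.log L ≤ bn^2) (hb2 : bn^2 ≤ 2*L) (hb0 : 0 < bn) :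
    |((bn + x/bn) - (1 - q^2/L)*(bn + z/bn)) / Real.sqrt (1 - (1 - q^2/L)^2)
      - (q + (x-z)/(2*q))|
      ≤ ((1+|x|)*(2+M/2)/Real.sqrt δ + Real.sqrt M * (2*(2+M/2)+M) + Real.sqrt M)
        * (1+|z|) * (Real.log L / L) := by
  have hL0 : (0:ℝ) < L := by linarith
  obtain ⟨hlog1, hlog15⟩ := log_facts hL
  set ε : ℝ := q^2/L with hεdef
  have hε0 : 0 < ε := by positivity
  have hεM : ε ≤ M/L := by rw [hεdef]; gcongr
  have hML : M/L ≤ 1/2 := by rw [div_le_iff₀ hL0]; linarith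
  have hεhalf : ε ≤ 1/2 := hεM.trans hML
  have harg : 1 - (1-ε)^2 = ε*(2-ε) := by ring
  have hargpos : 0 < 1 - (1-ε)^2 := by rw [harg]; exact mul_pos hε0 (by linarith)
  set s : ℝ := Real.sqrt (1 - (1-ε)^2) with hsdef
  have hs2 : s^2 = ε*(2-ε) := by rw [hsdef, Real.sq_sqrt hargpos.le, harg]
  have hs0 : 0 < s := Real.sqrt_pos.2 hargpos
  set P : ℝ := bn * s with hPdef
  have hP0 : 0 < P := mul_pos hb0 hs0
  have hP2 : P^2 = bn^2 * (ε*(2-ε)) := by rw [hPdef, mul_pow, hs2]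
  have hq2L : q^2 ≤ L := by linarith
  clear_value ε s P
  have expand : bn^2 * (q^2/L*(2-q^2/L)) = bn^2 * q^2 * (2*L - q^2) / L^2 := by
    field_simp
  have hPle : P ≤ 2*q := by
    have h1 : P^2 ≤ 4*q^2 := by
      rw [hP2, hεdef, expand, div_le_iff₀ (by positivity)]
      exact helperPle hL0 hb2 hq2L
    exact le_of_sq_le_sq' hP0.le (by positivity) (by linarith)
  set D : ℝ := 2*Real.log L/L + M/(2*L) with hDdef
  have hD0 : 0 < D := by positivity
  have hDhalf : D ≤ 1/2 := by
    rw [hDdef]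
    have h1 : 2*Real.log L/L ≤ 2/15 := by rw [div_le_iff₀ hL0]; linarith
    have h2 : M/(2*L) ≤ 1/4 := by rw [div_le_iff₀ (by positivity)]; linarith
    linarith
  have hlogpos : (0:ℝ) < Real.log L := by linarith
  have hDL : D * L^2 = 2*Real.log L*L + M*L/2 := by rw [hDdef]; field_simp
  clear_value D
  have hqD : q*D ≤ q*(1/2) := mul_le_mul_of_nonneg_left hDhalf hq0.le
  have hPge : 2*q*(1-D) ≤ P := by
    have e2 : 4*(1-D)*L^2 ≤ (2*L - 4*Real.log L)*(2*L - M) := by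
      rw [hDdef]; exact helperE2 hL0 hM0 hlogpos
    have e1 : (2*L - 4*Real.log L)*(2*L - M) ≤ bn^2 * (2*L - q^2) := by
      apply mul_le_mul hb1 (by linarith) (by linarith) (by positivity)
    have h1 : 4*q^2*(1-D) ≤ P^2 := by
      rw [hP2, hεdef, expand, le_div_iff₀ (by positivity)]
      linarith [mul_le_mul_of_nonneg_left e1 (sq_nonneg q),
        mul_le_mul_of_nonneg_left e2 (sq_nonneg q)]
    have hc0 : (0:ℝ) ≤ 2*q*(1-D) := by linarith
    have hcsq : (2*q*(1-D))^2 ≤ P^2 := by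
      have k : (0:ℝ) ≤ 4*q^2*(D*(1-D)) :=
        mul_nonneg (by positivity) (mul_nonneg hD0.le (by linarith))
      nlinarith [k, h1]
    exact le_of_sq_le_sq' hc0 hP0.le hcsq
  have hqP : q ≤ P := by linarith
  have hbn0 : bn ≠ 0 := hb0.ne'
  have h2εne : (2:ℝ)-ε ≠ 0 := by nlinarith
  have hnum : (bn + x/bn) - (1-ε)*(bn + z/bn) = (x-z)/bn + ε*bn + ε*z/bn := by
    field_simp; ring
  have hmid : ε*bn/s = P/(2-ε) := by
    rw [div_eq_div_iff hs0.ne' h2εne, hPdef]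
    linear_combination (-bn) * hs2
  have hA : ((bn + x/bn) - (1-ε)*(bn + z/bn)) / s
      = (x-z)/P + P/(2-ε) + ε*z/P := by
    rw [hnum, ← hmid, hPdef]
    field_simp
  rw [hA]
  have hdiff : (x-z)/P + P/(2-ε) + ε*z/P - (q + (x-z)/(2*q))
      = (x-z)*(1/P - 1/(2*q)) + (P/(2-ε) - q) + ε*z/P := by ring
  rw [hdiff]
  set G : ℝ := Real.log L / L with hGdef
  have hG0 : 0 < G := by positivity
  clear_value G
  have hsqδ : Real.sqrt δ ≤ q := by
    calc Real.sqrt δ ≤ Real.sqrt (q^2) := Real.sqrt_le_sqrt hqδ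
      _ = q := Real.sqrt_sq hq0.le
  have hsqδ0 : 0 < Real.sqrt δ := Real.sqrt_pos.2 hδ0
  have hqM' : q ≤ Real.sqrt M := Real.le_sqrt_of_sq_le hqM
  have hsM0 : (0:ℝ) ≤ Real.sqrt M := Real.sqrt_nonneg M
  have hDG : D ≤ (2 + M/2) * G := by
    rw [hDdef, hGdef]
    have h1 : M/(2*L) ≤ (M/2) * (Real.log L / L) := by
      rw [div_le_iff₀ (by positivity)]
      have he : (M/2) * (Real.log L / L) * (2*L) = M * Real.log L := by field_simp
      rw [he]
      linarith [mul_le_mul_of_nonneg_left hlog1 hM0.le]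
    have h2 : 2*Real.log L/L = 2 * (Real.log L / L) := by ring
    linarith
  have hεG : ε ≤ M * G := by
    refine hεM.trans ?_
    rw [hGdef, div_le_iff₀ hL0]
    have he : M * (Real.log L / L) * L = M * Real.log L := by field_simp
    rw [he]
    linarith [mul_le_mul_of_nonneg_left hlog1 hM0.le]
  -- T1
  have hT1 : |(x-z)*(1/P - 1/(2*q))| ≤ (1+|x|)*(1+|z|) * ((2+M/2)/Real.sqrt δ * G) := by
    rw [abs_mul]
    have hd : |1/P - 1/(2*q)| ≤ D/q := by
      have hnn : 0 ≤ 1/P - 1/(2*q) := by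
        rw [sub_nonneg]
        apply one_div_le_one_div_of_le hP0 hPle
      rw [abs_of_nonneg hnn]
      have heq : 1/P - 1/(2*q) = (2*q - P)/(P*(2*q)) := by field_simp
      rw [heq]
      have hnumb : 2*q - P ≤ 2*q*D := by linarith
      calc (2*q - P)/(P*(2*q)) ≤ (2*q*D)/(q*(2*q)) := by
            apply div_le_div₀ (by positivity) hnumb (by positivity)
            have := mul_le_mul_of_nonneg_right hqP (by positivity : (0:ℝ) ≤ 2*q)
            linarith
        _ = D/q := by field_simp
    have hxz : |x - z| ≤ (1+|x|)*(1+|z|) := by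
      calc |x - z| ≤ |x| + |z| := abs_sub x z
        _ ≤ (1+|x|)*(1+|z|) := by linarith [mul_nonneg (abs_nonneg x) (abs_nonneg z)]
    calc |x-z| * |1/P - 1/(2*q)| ≤ (1+|x|)*(1+|z|) * (D/q) := by
          apply mul_le_mul hxz hd (abs_nonneg _) (by positivity)
      _ ≤ (1+|x|)*(1+|z|) * ((2+M/2)/Real.sqrt δ * G) := by
          apply mul_le_mul_of_nonneg_left _ (by positivity)
          calc D/q ≤ ((2+M/2)*G)/Real.sqrt δ :=
                div_le_div₀ (by positivity) hDG hsqδ0 hsqδ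
            _ = (2+M/2)/Real.sqrt δ * G := by ring
  -- T2
  have hT2 : |P/(2-ε) - q| ≤ Real.sqrt M * (2*(2+M/2)+M) * G := by
    have h2ε : (1:ℝ) ≤ 2-ε := by linarith
    have heq : P/(2-ε) - q = (P - 2*q + q*ε)/(2-ε) := by field_simp; ring
    rw [heq, abs_div, abs_of_pos (by linarith : (0:ℝ) < 2-ε)]
    have habs : |P - 2*q + q*ε| ≤ 2*q*D + q*ε := by
      rw [abs_le]
      constructor <;> linarith [mul_nonneg hq0.le hD0.le, mul_nonneg hq0.le hε0.le]
    calc |P - 2*q + q*ε|/(2-ε) ≤ (2*q*D + q*ε)/1 :=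
          div_le_div₀ (by positivity) habs one_pos h2ε
      _ = 2*q*D + q*ε := by ring
      _ ≤ Real.sqrt M * (2*(2+M/2)+M) * G := by
          have e1 : q*D ≤ Real.sqrt M * ((2+M/2)*G) :=
            mul_le_mul hqM' hDG hD0.le hsM0
          have e2 : q*ε ≤ Real.sqrt M * (M*G) :=
            mul_le_mul hqM' hεG hε0.le hsM0
          linarith
  -- T3
  have hT3 : |ε*z/P| ≤ |z| * (Real.sqrt M * G) := by
    rw [abs_div, abs_mul, abs_of_pos hε0, abs_of_pos hP0]
    have h1 : ε*|z|/P ≤ ε*|z|/q := by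
      apply div_le_div_of_nonneg_left (by positivity) hq0 hqP
    have h2 : ε*|z|/q = |z| * (ε/q) := by ring
    have h3 : ε/q ≤ Real.sqrt M * G := by
      have hεq : ε/q = q/L := by rw [hεdef]; field_simp
      rw [hεq]
      calc q/L ≤ Real.sqrt M/L := by gcongr
        _ ≤ Real.sqrt M * G := by
            rw [hGdef]
            rw [div_le_iff₀ hL0]
            have he : Real.sqrt M * (Real.log L / L) * L = Real.sqrt M * Real.log L := by
              field_simp
            rw [he]
            linarith [mul_le_mul_of_nonneg_left hlog1 hsM0]
    calc ε*|z|/P ≤ ε*|z|/q := h1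
      _ = |z| * (ε/q) := h2
      _ ≤ |z| * (Real.sqrt M * G) := mul_le_mul_of_nonneg_left h3 (abs_nonneg z)
  calc |(x-z)*(1/P - 1/(2*q)) + (P/(2-ε) - q) + ε*z/P|
      ≤ |(x-z)*(1/P - 1/(2*q))| + |P/(2-ε) - q| + |ε*z/P| := abs_add_three _ _ _
    _ ≤ (1+|x|)*(1+|z|) * ((2+M/2)/Real.sqrt δ * G) + Real.sqrt M * (2*(2+M/2)+M) * G
        + |z| * (Real.sqrt M * G) := by linarith
    _ ≤ ((1+|x|)*(2+M/2)/Real.sqrt δ + Real.sqrt M * (2*(2+M/2)+M) + Real.sqrt M)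
        * (1+|z|) * G := by
        have k1 : (0:ℝ) ≤ Real.sqrt M * (2*(2+M/2)+M) * G * |z| :=
          mul_nonneg (mul_nonneg (mul_nonneg hsM0 (by linarith)) hG0.le) (abs_nonneg z)
        have k2 : (0:ℝ) ≤ Real.sqrt M * G := mul_nonneg hsM0 hG0.le
        have expand : ((1+|x|)*(2+M/2)/Real.sqrt δ + Real.sqrt M * (2*(2+M/2)+M) + Real.sqrt M)
              * (1+|z|) * G
            - ((1+|x|)*(1+|z|) * ((2+M/2)/Real.sqrt δ * G) + Real.sqrt M * (2*(2+M/2)+M) * G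
              + |z| * (Real.sqrt M * G))
            = Real.sqrt M * (2*(2+M/2)+M) * G * |z| + Real.sqrt M * G := by ring
        linarith [k1, k2, expand]


set_option maxHeartbeats 1600000 in
/-- uniform bound on the error of replacing the argument of `Φ` by its limit. -/
theorem stmt8 (m : ℝ → ℝ) (hmpos : ∀ t ∈ Set.Icc (0 : ℝ) 1, 0 < m t)
    (hmcont : ContinuousOn m (Set.Icc (0 : ℝ) 1))
    (b : ℕ → ℝ)
    (hb : ∀ n : ℕ, 2 ≤ n → 0 < b n ∧ 1 - stdCDF (b n) = 1 / n)
    (x : ℝ) :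
    ∃ C > (0 : ℝ), ∃ N : ℕ, ∀ n ≥ N, ∀ i ∈ Finset.Icc 1 n, ∀ z : ℝ,
      |stdCDF (((b n + x / b n) - (1 - m ((i : ℝ) / n) / Real.log n) * (b n + z / b n)) /
          Real.sqrt (1 - (1 - m ((i : ℝ) / n) / Real.log n) ^ 2))
        - stdCDF (Real.sqrt (m ((i : ℝ) / n)) + (x - z) / (2 * Real.sqrt (m ((i : ℝ) / n))))|
      ≤ C * (1 + |z|) * (Real.log (Real.log n) / Real.log n) := by
  have hne : (Set.Icc (0:ℝ) 1).Nonempty := Set.nonempty_Icc.mpr zero_le_one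
  obtain ⟨tmin, htmin, hminOn⟩ := isCompact_Icc.exists_isMinOn hne hmcont
  obtain ⟨tmax, htmax, hmaxOn⟩ := isCompact_Icc.exists_isMaxOn hne hmcont
  set δ : ℝ := m tmin with hδdef
  set M : ℝ := m tmax with hMdef
  have hδ0 : 0 < δ := hmpos tmin htmin
  have hM0 : 0 < M := hmpos tmax htmax
  obtain ⟨C₀, hC₀def⟩ : ∃ c : ℝ,
      c = (1+|x|)*(2+M/2)/Real.sqrt δ + Real.sqrt M * (2*(2+M/2)+M) + Real.sqrt M := ⟨_, rfl⟩
  have hC₀ : 0 ≤ C₀ := by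
    rw [hC₀def]
    have h1 : 0 ≤ (1+|x|)*(2+M/2)/Real.sqrt δ := by
      apply div_nonneg _ (Real.sqrt_nonneg δ)
      nlinarith [abs_nonneg x, hM0]
    have h2 : 0 ≤ Real.sqrt M*(2*(2+M/2)+M) :=
      mul_nonneg (Real.sqrt_nonneg M) (by nlinarith)
    linarith [Real.sqrt_nonneg M]
  refine ⟨C₀ + 1, by linarith, max 2 ⌈Real.exp (max 1000 (2*M))⌉₊, ?_⟩
  intro n hn i hi z
  have hn2 : 2 ≤ n := le_trans (le_max_left _ _) hn
  have hn0 : (0:ℝ) < n := by positivity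
  have hnK : Real.exp (max 1000 (2*M)) ≤ (n:ℝ) := by
    calc Real.exp (max 1000 (2*M)) ≤ (⌈Real.exp (max 1000 (2*M))⌉₊ : ℝ) := Nat.le_ceil _
      _ ≤ (n:ℝ) := by
          exact_mod_cast Nat.cast_le.mpr (le_trans (le_max_right _ _) hn)
  set L : ℝ := Real.log n with hLdef
  have hLK : max 1000 (2*M) ≤ L := by
    rw [hLdef, Real.le_log_iff_exp_le hn0]
    exact hnK
  have hL1000 : (1000:ℝ) ≤ L := le_trans (le_max_left _ _) hLK
  have hLM : 2*M ≤ L := le_trans (le_max_right _ _) hLK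
  obtain ⟨hbn0, hbtail⟩ := hb n hn2
  have htail : 1 - stdCDF (b n) = Real.exp (-L) := by
    rw [hbtail, hLdef, Real.exp_neg, Real.exp_log hn0, one_div]
  obtain ⟨hb1, hb2⟩ := bn_bounds hbn0 hL1000 htail
  rw [Finset.mem_Icc] at hi
  have ht : (i:ℝ)/n ∈ Set.Icc (0:ℝ) 1 := by
    constructor
    · positivity
    · rw [div_le_one hn0]
      exact_mod_cast hi.2
  have hμ0 : 0 < m ((i:ℝ)/n) := hmpos _ ht
  have hμδ : δ ≤ m ((i:ℝ)/n) := isMinOn_iff.1 hminOn _ ht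
  have hμM : m ((i:ℝ)/n) ≤ M := isMaxOn_iff.1 hmaxOn _ ht
  set q : ℝ := Real.sqrt (m ((i:ℝ)/n)) with hqdef
  have hq2 : q^2 = m ((i:ℝ)/n) := Real.sq_sqrt hμ0.le
  have hq0 : 0 < q := Real.sqrt_pos.2 hμ0
  rw [← hq2]
  have hest := main_est x z q (b n) L M δ hδ0 hq0 (by rw [hq2]; exact hμδ)
    (by rw [hq2]; exact hμM) hL1000 hLM hM0 hb1 hb2 hbn0
  have hlip := stdCDF_lipschitz
    (((b n + x / b n) - (1 - q^2 / L) * (b n + z / b n)) / Real.sqrt (1 - (1 - q^2/L) ^ 2))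
    (q + (x - z) / (2 * q))
  have hG0 : 0 < Real.log L / L := by
    have := (log_facts hL1000).1
    positivity
  have hmain : |(((b n + x / b n) - (1 - q^2 / L) * (b n + z / b n)) /
      Real.sqrt (1 - (1 - q^2/L) ^ 2)) - (q + (x - z) / (2 * q))|
      ≤ C₀ * (1 + |z|) * (Real.log L / L) := by
    rw [hC₀def]
    exact hest
  have hfin : C₀ * (1 + |z|) * (Real.log L / L) ≤ (C₀ + 1) * (1 + |z|) * (Real.log L / L) := by
    have h1 : (0:ℝ) ≤ (1 + |z|) * (Real.log L / L) :=
      mul_nonneg (by positivity) hG0.le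
    nlinarith [h1]
  exact le_trans hlip (le_trans hmain hfin)
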